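/- Assume X_A and X_B are conditionally independent given Y. Define h_A*(x_A)(y) = Pr[Y=y|X_A=x_A] and v_B*(x_B)(y) = Pr[X_B=x_B|Y=y]. Then v_B* satisfies the normalization constraint Σ_{x_B} v_B*(x_B)(y) = 1 for every y, and for every hypothesis pair h_A : Σ_A → Δ_Σ and v_B : Σ_B → [0,1]^Σ satisfying the normalization constraint and with Σ_y v_B(x_B)(y)·h_A(x_A)(y) > 0 for all (x_A,x_B), the expected LSR-gain satisfies G(h_A, v_B) ≤ G(h_A*, v_B*) = Σ_{x_A,x_B} Pr[X_A=x_A, X_B=x_B]·log(Pr[X_B=x_B|X_A=x_A]) (i.e., the maximum equals minus the conditional Shannon entropy of X_B given X_A). -/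

import Mathlib

noncomputable section

variable {SA SB S : Type*}

/-- Joint probability `Pr[X_A = a, X_B = b]` induced by the joint pmf `ν` of `(X_A, X_B, Y)`. -/
def jAB [Fintype S] (ν : SA → SB → S → ℝ) (a : SA) (b : SB) : ℝ := ∑ y, ν a b y

/-- Joint probability `Pr[X_A = a, Y = y]`. -/
def jAY [Fintype SB] (ν : SA → SB → S → ℝ) (a : SA) (y : S) : ℝ := ∑ b, ν a b y

/-- Joint probability `Pr[X_B = b, Y = y]`. -/
def jBY [Fintype SA] (ν : SA → SB → S → ℝ) (b : SB) (y : S) : ℝ := ∑ a, ν a b y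

/-- Marginal probability `Pr[X_A = a]`. -/
def prA [Fintype SB] [Fintype S] (ν : SA → SB → S → ℝ) (a : SA) : ℝ := ∑ b, ∑ y, ν a b y

/-- Marginal probability `Pr[X_B = b]`. -/
def prB [Fintype SA] [Fintype S] (ν : SA → SB → S → ℝ) (b : SB) : ℝ := ∑ a, ∑ y, ν a b y

/-- Marginal probability `Pr[Y = y]`. -/
def prY [Fintype SA] [Fintype SB] (ν : SA → SB → S → ℝ) (y : S) : ℝ := ∑ a, ∑ b, ν a b y

/-- Pointwise mutual information `K(a,b) = Pr[a,b]/(Pr[a]·Pr[b])`. -/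
def K [Fintype SA] [Fintype SB] [Fintype S] (ν : SA → SB → S → ℝ) (a : SA) (b : SB) : ℝ :=
  jAB ν a b / (prA ν a * prB ν b)

/-- Conditional probability `Pr[Y = y | X_A = a]`. -/
def condA [Fintype SB] [Fintype S] (ν : SA → SB → S → ℝ) (a : SA) (y : S) : ℝ :=
  jAY ν a y / prA ν a

/-- Conditional probability `Pr[Y = y | X_B = b]`. -/
def condB [Fintype SA] [Fintype S] (ν : SA → SB → S → ℝ) (b : SB) (y : S) : ℝ :=
  jBY ν b y / prB ν b

/-- `X_A` and `X_B` are conditionally independent given `Y`: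
`Pr[a, b | y] = Pr[a | y] · Pr[b | y]` for all `a, b, y`. -/
def CondIndep [Fintype SA] [Fintype SB] (ν : SA → SB → S → ℝ) : Prop :=
  ∀ a b y, ν a b y / prY ν y = (jAY ν a y / prY ν y) * (jBY ν b y / prY ν y)

/-- `ν` is a probability mass function. -/
def IsPMF [Fintype SA] [Fintype SB] [Fintype S] (ν : SA → SB → S → ℝ) : Prop :=
  (∀ a b y, 0 ≤ ν a b y) ∧ ∑ a, ∑ b, ∑ y, ν a b y = 1

/-- `p` is a probability vector: nonnegative entries summing to `1`. -/
def IsProbVec {T : Type*} [Fintype T] (p : T → ℝ) : Prop := (∀ t, 0 ≤ p t) ∧ ∑ t, p t = 1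

/-- The convex conjugate `f*(x) = sup_t (t·x − f(t))`, as a real-valued supremum. -/
def fconj (f : ℝ → ℝ) (x : ℝ) : ℝ := sSup (Set.range fun t => t * x - f t)

/-- `c` is a subgradient of `f` at `t`: `f(s) ≥ f(t) + c·(s − t)` for all `s`. -/
def IsSubgradientAt (f : ℝ → ℝ) (t c : ℝ) : Prop := ∀ s : ℝ, f t + c * (s - t) ≤ f s

/-- The f-mutual information `MI^f(X_A;X_B) = Σ_{a,b} Pr[a]·Pr[b]·f(K(a,b))`. -/
def MIf [Fintype SA] [Fintype SB] [Fintype S] (f : ℝ → ℝ) (ν : SA → SB → S → ℝ) : ℝ :=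
  ∑ a, ∑ b, prA ν a * prB ν b * f (K ν a b)

/-- The agreement `g(a,b) = Σ_y h_A(a)(y)·h_B(b)(y)/p(y)`. -/
def gagr [Fintype S] (hA : SA → S → ℝ) (hB : SB → S → ℝ) (p : S → ℝ) (a : SA) (b : SB) : ℝ :=
  ∑ y, hA a y * hB b y / p y

/-- Expected `f`-mutual information gain
`MIG^f(h_A,h_B,p) = Σ Pr[a,b]·f'(g(a,b)) − Σ Pr[a]·Pr[b]·f*(f'(g(a,b)))`. -/
def MIG [Fintype SA] [Fintype SB] [Fintype S] (f : ℝ → ℝ) (ν : SA → SB → S → ℝ)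
    (hA : SA → S → ℝ) (hB : SB → S → ℝ) (p : S → ℝ) : ℝ :=
  ∑ a, ∑ b, jAB ν a b * deriv f (gagr hA hB p a b)
    - ∑ a, ∑ b, prA ν a * prB ν b * fconj f (deriv f (gagr hA hB p a b))

/-- Each agent's expected payment in the multi-task common ground mechanism `MCG(f)`. -/
def Pay [Fintype SA] [Fintype SB] [Fintype S] (f : ℝ → ℝ) (ν : SA → SB → S → ℝ)
    (sA : SA → S → ℝ) (sB : SB → S → ℝ) : ℝ :=
  MIG f ν sA sB (prY ν)

/-- `({a^{x_A}}, {b^{x_B}}, r)` is a solution of the agreement system: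
probability vectors, `r` strictly positive, with
`Σ_y a^{x_A}(y)·b^{x_B}(y)/r(y) = K(x_A,x_B)` for all `x_A, x_B`. -/
def AgreementSolution [Fintype SA] [Fintype SB] [Fintype S] (ν : SA → SB → S → ℝ)
    (a : SA → S → ℝ) (b : SB → S → ℝ) (r : S → ℝ) : Prop :=
  (∀ xa, IsProbVec (a xa)) ∧ (∀ xb, IsProbVec (b xb)) ∧ IsProbVec r ∧ (∀ y, 0 < r y) ∧
    ∀ xa xb, (∑ y, a xa y * b xb y / r y) = K ν xa xb

/-- The prior is well-defined: any two solutions of the agreement system coincide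
up to a permutation of `Σ`. -/
def WellDefinedPrior [Fintype SA] [Fintype SB] [Fintype S] (ν : SA → SB → S → ℝ) : Prop :=
  ∀ (a : SA → S → ℝ) (b : SB → S → ℝ) (r : S → ℝ)
    (c : SA → S → ℝ) (d : SB → S → ℝ) (r' : S → ℝ),
    AgreementSolution ν a b r → AgreementSolution ν c d r' →
    ∃ π : Equiv.Perm S, ∀ y, r (π y) = r' y ∧ (∀ xa, a xa (π y) = c xa y)
      ∧ (∀ xb, b xb (π y) = d xb y)

/-- The prior is stable: fixing the truthful `A`-side (resp. `B`-side) of the agreement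
system, the only solution for the other side is the truthful one. -/
def StablePrior [Fintype SA] [Fintype SB] [Fintype S] (ν : SA → SB → S → ℝ) : Prop :=
  (∀ b : SB → S → ℝ, (∀ xb, IsProbVec (b xb)) →
    (∀ xa xb, (∑ y, condA ν xa y * b xb y / prY ν y) = K ν xa xb) →
    ∀ xb y, b xb y = condB ν xb y) ∧
  (∀ a : SA → S → ℝ, (∀ xa, IsProbVec (a xa)) →
    (∀ xa xb, (∑ y, a xa y * condB ν xb y / prY ν y) = K ν xa xb) →
    ∀ xa y, a xa y = condA ν xa y)


lemma aux_prY_eq (ν : SA → SB → S → ℝ) [Fintype SA] [Fintype SB] (y : S) :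
    ∑ b, jBY ν b y = prY ν y := by
  simp only [jBY, prY]
  exact Finset.sum_comm

lemma aux_prA_eq (ν : SA → SB → S → ℝ) [Fintype SB] [Fintype S] (a : SA) :
    ∑ b, jAB ν a b = prA ν a := rfl

lemma aux_nu_eq (ν : SA → SB → S → ℝ) [Fintype SA] [Fintype SB] [Fintype S]
    (hY : ∀ y, 0 < prY ν y) (hci : CondIndep ν) (a : SA) (b : SB) (y : S) :
    ν a b y = jAY ν a y * jBY ν b y / prY ν y := by
  have h := hci a b y
  have hne : prY ν y ≠ 0 := (hY y).ne'
  field_simp at h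
  rw [eq_div_iff hne]
  apply mul_right_cancel₀ hne
  ring_nf
  ring_nf at h
  linear_combination (prY ν y) * h

lemma aux_truthful_sum (ν : SA → SB → S → ℝ) [Fintype SA] [Fintype SB] [Fintype S]
    (hY : ∀ y, 0 < prY ν y) (hci : CondIndep ν) (a : SA) (b : SB) :
    ∑ y, (jBY ν b y / prY ν y) * condA ν a y = jAB ν a b / prA ν a := by
  unfold condA jAB
  rw [Finset.sum_div]
  apply Finset.sum_congr rfl
  intro y _
  rw [aux_nu_eq ν hY hci a b y]
  have hne : prY ν y ≠ 0 := (hY y).ne'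
  field_simp

/-- Theorem 6.1 (LSR-gain / MLE): under conditional independence, the truthful pair
`h_A*(a)(y) = Pr[Y=y|X_A=a]`, `v_B*(b)(y) = Pr[X_B=b|Y=y]` satisfies the normalization
constraint and maximizes the expected LSR-gain over all normalized hypothesis pairs
with positive inner sums; the maximum equals
`Σ_{a,b} Pr[a,b]·log Pr[X_B=b|X_A=a]` (minus the conditional entropy `H(X_B|X_A)`). -/
theorem stmt_14 [Fintype SA] [Fintype SB] [Fintype S] [Nonempty SA] [Nonempty SB] [Nonempty S]
    (ν : SA → SB → S → ℝ) (hν : IsPMF ν)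
    (hAB : ∀ a b, 0 < jAB ν a b) (hY : ∀ y, 0 < prY ν y)
    (hci : CondIndep ν) :
    (∀ y, ∑ b, jBY ν b y / prY ν y = 1)
    ∧ (∀ (hA' : SA → S → ℝ) (vB : SB → S → ℝ),
        (∀ a, IsProbVec (hA' a)) →
        (∀ b y, 0 ≤ vB b y ∧ vB b y ≤ 1) →
        (∀ y, ∑ b, vB b y = 1) →
        (∀ a b, 0 < ∑ y, vB b y * hA' a y) →
        ∑ a, ∑ b, jAB ν a b * Real.log (∑ y, vB b y * hA' a y)
          ≤ ∑ a, ∑ b, jAB ν a b * Real.log (∑ y, (jBY ν b y / prY ν y) * condA ν a y))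
    ∧ ∑ a, ∑ b, jAB ν a b * Real.log (∑ y, (jBY ν b y / prY ν y) * condA ν a y)
        = ∑ a, ∑ b, jAB ν a b * Real.log (jAB ν a b / prA ν a) := by
  
  have hprApos : ∀ a, 0 < prA ν a := by
    intro a
    rw [← aux_prA_eq]
    exact Finset.sum_pos (fun b _ => hAB a b) Finset.univ_nonempty
  refine ⟨?_, ?_, ?_⟩
  · intro y
    rw [← Finset.sum_div, aux_prY_eq, div_self (hY y).ne']
  · intro hA' vB hprob hvB01 hnorm hpos
    have hQsum : ∀ a, ∑ b, ∑ y, vB b y * hA' a y = 1 := by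
      intro a
      rw [Finset.sum_comm]
      calc ∑ y, ∑ b, vB b y * hA' a y
          = ∑ y, (∑ b, vB b y) * hA' a y := by
            simp [Finset.sum_mul]
        _ = ∑ y, hA' a y := by
            apply Finset.sum_congr rfl; intro y _; rw [hnorm y, one_mul]
        _ = 1 := (hprob a).2
    apply Finset.sum_le_sum
    intro a _
    have hkey : ∀ b : SB, jAB ν a b * Real.log (∑ y, vB b y * hA' a y)
        ≤ jAB ν a b * Real.log (jAB ν a b / prA ν a)
          + (prA ν a * (∑ y, vB b y * hA' a y) - jAB ν a b) := by
      intro b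
      set Q := ∑ y, vB b y * hA' a y with hQ
      have hQpos : 0 < Q := hpos a b
      have hPpos : 0 < jAB ν a b / prA ν a := div_pos (hAB a b) (hprApos a)
      have hratio : 0 < Q / (jAB ν a b / prA ν a) := div_pos hQpos hPpos
      have hlog : Real.log (Q / (jAB ν a b / prA ν a)) ≤ Q / (jAB ν a b / prA ν a) - 1 :=
        Real.log_le_sub_one_of_pos hratio
      rw [Real.log_div hQpos.ne' hPpos.ne'] at hlog
      have hd : Q / (jAB ν a b / prA ν a) = prA ν a * Q / jAB ν a b := by
        field_simp
      rw [hd] at hlog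
      have h2 : jAB ν a b * (Real.log Q - Real.log (jAB ν a b / prA ν a))
          ≤ jAB ν a b * (prA ν a * Q / jAB ν a b - 1) :=
        mul_le_mul_of_nonneg_left hlog (hAB a b).le
      have h3 : jAB ν a b * (prA ν a * Q / jAB ν a b - 1) = prA ν a * Q - jAB ν a b := by
        field_simp [(hAB a b).ne']
      rw [h3] at h2
      linarith [h2]
    calc ∑ b, jAB ν a b * Real.log (∑ y, vB b y * hA' a y)
        ≤ ∑ b, (jAB ν a b * Real.log (jAB ν a b / prA ν a)
            + (prA ν a * (∑ y, vB b y * hA' a y) - jAB ν a b)) :=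
          Finset.sum_le_sum fun b _ => hkey b
      _ = ∑ b, jAB ν a b * Real.log (jAB ν a b / prA ν a)
            + (prA ν a * (∑ b, ∑ y, vB b y * hA' a y) - ∑ b, jAB ν a b) := by
          rw [Finset.sum_add_distrib, Finset.sum_sub_distrib, ← Finset.mul_sum]
      _ = ∑ b, jAB ν a b * Real.log (∑ y, (jBY ν b y / prY ν y) * condA ν a y) := by
          rw [hQsum a, aux_prA_eq, mul_one, sub_self, add_zero]
          apply Finset.sum_congr rfl
          intro b _
          rw [aux_truthful_sum ν hY hci a b]
  · apply Finset.sum_congr rfl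
    intro a _
    apply Finset.sum_congr rfl
    intro b _
    rw [aux_truthful_sum ν hY hci a b]
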